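/- arXiv:2212.04187 — 2 statements merged into one kernel-verified Lean document; each statement's English description precedes it below -/
import Mathlib

section
/- Assume the non-parallel condition (NP): A e_i ≠ η A e_j for all indices i ≠ j and all η ∈ ℝ. Let x* ∈ ℝⁿ with support J = supp(x*), and suppose there is j̃ ∈ J such that e_j lies in the orthogonal complement of ker(A) for every j ∈ J \ {j̃}. Then there exist real numbers a_j, j ∈ J, such that the vector v = Σ_{j∈J} a_j W⁻¹ P e_j satisfies v_i = sgn(x*_i) for all i ∈ J and v_i ∈ (−1, 1) for all i ∉ J; moreover, for every α > 0 with sgn(x*_j − α a_j) = sgn(x*_j) for all j ∈ J, the vector y*_α = Σ_{j∈J} (x*_j − α a_j) e_j minimizes T_α(x) = ½ ‖P x − P x*‖₂² + α Σ_{i=1}^n w_i |x_i|. -/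
open scoped RealInnerProductSpace Classical

/-- The `i`-th standard basis vector of `ℝⁿ`. -/
noncomputable def stdBasis (n : ℕ) (i : Fin n) : EuclideanSpace ℝ (Fin n) :=
  EuclideanSpace.single i 1

/-- `P`: the orthogonal projection of `ℝⁿ` onto the orthogonal complement of `ker A`
(this equals `A†A` for the Moore–Penrose pseudoinverse `A†`). -/
noncomputable def proj {m n : ℕ} (A : EuclideanSpace ℝ (Fin n) →ₗ[ℝ] EuclideanSpace ℝ (Fin m))
    (x : EuclideanSpace ℝ (Fin n)) : EuclideanSpace ℝ (Fin n) :=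
  (Submodule.orthogonalProjection (LinearMap.ker A)ᗮ x : EuclideanSpace ℝ (Fin n))

/-- The weights `w i = ‖P e_i‖₂`. -/
noncomputable def wgt {m n : ℕ} (A : EuclideanSpace ℝ (Fin n) →ₗ[ℝ] EuclideanSpace ℝ (Fin m))
    (i : Fin n) : ℝ :=
  ‖proj A (stdBasis n i)‖

/-- The weighted ℓ¹ norm `‖W x‖₁ = ∑ i, w i * |x i|`. -/
noncomputable def wl1 {m n : ℕ} (A : EuclideanSpace ℝ (Fin n) →ₗ[ℝ] EuclideanSpace ℝ (Fin m))
    (x : EuclideanSpace ℝ (Fin n)) : ℝ :=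
  ∑ i, wgt A i * |x i|

section Aux
variable {m n : ℕ} (A : EuclideanSpace ℝ (Fin n) →ₗ[ℝ] EuclideanSpace ℝ (Fin m))

noncomputable def projL : EuclideanSpace ℝ (Fin n) →L[ℝ] EuclideanSpace ℝ (Fin n) :=
  Submodule.starProjection (LinearMap.ker A)ᗮ

lemma proj_eq (x : EuclideanSpace ℝ (Fin n)) : proj A x = projL A x := rfl

lemma proj_mem (x : EuclideanSpace ℝ (Fin n)) : proj A x ∈ (LinearMap.ker A)ᗮ :=
  (Submodule.orthogonalProjection (LinearMap.ker A)ᗮ x).2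

lemma proj_inner (u v : EuclideanSpace ℝ (Fin n)) : ⟪proj A u, v⟫ = ⟪u, proj A v⟫ :=
  Submodule.inner_starProjection_left_eq_right _ u v

lemma proj_of_mem {x : EuclideanSpace ℝ (Fin n)} (hx : x ∈ (LinearMap.ker A)ᗮ) :
    proj A x = x :=
  Submodule.starProjection_eq_self_iff.2 hx

lemma proj_idem (x : EuclideanSpace ℝ (Fin n)) : proj A (proj A x) = proj A x :=
  proj_of_mem A (proj_mem A x)

lemma sub_proj_mem (x : EuclideanSpace ℝ (Fin n)) : x - proj A x ∈ LinearMap.ker A := by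
  have := Submodule.sub_starProjection_mem_orthogonal (K := (LinearMap.ker A)ᗮ) x
  rwa [Submodule.orthogonal_orthogonal] at this

lemma A_proj (x : EuclideanSpace ℝ (Fin n)) : A (proj A x) = A x := by
  have h := sub_proj_mem A x
  rw [LinearMap.mem_ker, map_sub, sub_eq_zero] at h
  exact h.symm

lemma coord_eq_inner (z : EuclideanSpace ℝ (Fin n)) (i : Fin n) :
    z i = ⟪stdBasis n i, z⟫ := by
  rw [stdBasis, EuclideanSpace.inner_single_left]; simp

lemma proj_coord (z : EuclideanSpace ℝ (Fin n)) (i : Fin n) :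
    proj A z i = ⟪proj A (stdBasis n i), proj A z⟫ := by
  rw [coord_eq_inner (proj A z) i, proj_inner, proj_idem]

lemma proj_ne_zero (hA : ∀ i, stdBasis n i ∉ LinearMap.ker A) (i : Fin n) :
    proj A (stdBasis n i) ≠ 0 := by
  intro h
  apply hA i
  have := sub_proj_mem A (stdBasis n i)
  rwa [h, sub_zero] at this

lemma wgt_pos (hA : ∀ i, stdBasis n i ∉ LinearMap.ker A) (i : Fin n) : 0 < wgt A i :=
  norm_pos_iff.2 (proj_ne_zero A hA i)

lemma dep_of_eq {N : ℕ} {w v : EuclideanSpace ℝ (Fin N)} (hv : ‖v‖ ≠ 0)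
    (h : ‖v‖ • w = ‖w‖ • v) : w = (‖v‖⁻¹ * ‖w‖) • v := by
  have h2 := congrArg (fun z => ‖v‖⁻¹ • z) h
  simpa [smul_smul, inv_mul_cancel₀ hv] using h2

lemma strictCS (hA : ∀ i, stdBasis n i ∉ LinearMap.ker A)
    (hNP : ∀ i j : Fin n, i ≠ j → ∀ η : ℝ, A (stdBasis n i) ≠ η • A (stdBasis n j))
    {i j : Fin n} (hij : i ≠ j) :
    |⟪proj A (stdBasis n i), proj A (stdBasis n j)⟫| < wgt A i * wgt A j := by
  set u := proj A (stdBasis n i) with hu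
  set v := proj A (stdBasis n j) with hv
  have hu0 : u ≠ 0 := proj_ne_zero A hA i
  have hv0 : v ≠ 0 := proj_ne_zero A hA j
  have hvnorm : ‖v‖ ≠ 0 := norm_ne_zero_iff.2 hv0
  have key : ∀ η : ℝ, u ≠ η • v := by
    intro η hcon
    apply hNP i j hij η
    calc A (stdBasis n i) = A u := (A_proj A _).symm
      _ = A (η • v) := by rw [hcon]
      _ = η • A v := by rw [map_smul]
      _ = η • A (stdBasis n j) := by rw [hv, A_proj]
  have hwi : wgt A i = ‖u‖ := rfl
  have hwj : wgt A j = ‖v‖ := rfl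
  rw [hwi, hwj, abs_lt]
  constructor
  · have h1 : ⟪-u, v⟫ < ‖-u‖ * ‖v‖ := by
      rw [inner_lt_norm_mul_iff_real]
      intro hcon
      apply key (-(‖v‖⁻¹ * ‖-u‖))
      have h3 := dep_of_eq hvnorm hcon
      rw [neg_smul, ← h3, neg_neg]
    rw [inner_neg_left, norm_neg] at h1
    linarith
  · rw [inner_lt_norm_mul_iff_real]
    intro hcon
    exact key _ (dep_of_eq hvnorm hcon)

lemma real_sign_mul_self (z : ℝ) : Real.sign z * z = |z| := by
  rcases lt_trichotomy z 0 with h | h | h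
  · rw [Real.sign_of_neg h, abs_of_neg h]; ring
  · simp [h]
  · rw [Real.sign_of_pos h, abs_of_pos h]; ring

end Aux

theorem stmt10 {m n : ℕ}
    (A : EuclideanSpace ℝ (Fin n) →ₗ[ℝ] EuclideanSpace ℝ (Fin m))
    (hA : ∀ i, stdBasis n i ∉ LinearMap.ker A)
    (hNP : ∀ i j : Fin n, i ≠ j → ∀ η : ℝ, A (stdBasis n i) ≠ η • A (stdBasis n j))
    (xstar : EuclideanSpace ℝ (Fin n)) (jt : Fin n) (hjt : xstar jt ≠ 0)
    (hJperp : ∀ j : Fin n, xstar j ≠ 0 → j ≠ jt → stdBasis n j ∈ (LinearMap.ker A)ᗮ) :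
    ∃ a : Fin n → ℝ,
      (∀ i, xstar i ≠ 0 →
        (∑ j ∈ Finset.univ.filter (fun j => xstar j ≠ 0),
          a j * ((wgt A i)⁻¹ * proj A (stdBasis n j) i)) = Real.sign (xstar i)) ∧
      (∀ i, xstar i = 0 →
        (∑ j ∈ Finset.univ.filter (fun j => xstar j ≠ 0),
          a j * ((wgt A i)⁻¹ * proj A (stdBasis n j) i)) ∈ Set.Ioo (-1 : ℝ) 1) ∧
      ∀ α : ℝ, 0 < α →
        (∀ j, xstar j ≠ 0 → Real.sign (xstar j - α * a j) = Real.sign (xstar j)) →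
        ∀ x : EuclideanSpace ℝ (Fin n),
          (1 / 2) * ‖proj A (∑ j ∈ Finset.univ.filter (fun j => xstar j ≠ 0),
              (xstar j - α * a j) • stdBasis n j) - proj A xstar‖ ^ 2 +
            α * wl1 A (∑ j ∈ Finset.univ.filter (fun j => xstar j ≠ 0),
              (xstar j - α * a j) • stdBasis n j) ≤
          (1 / 2) * ‖proj A x - proj A xstar‖ ^ 2 + α * wl1 A x := by
  classical
  set J := Finset.univ.filter (fun j => xstar j ≠ 0) with hJ
  have hjtJ : jt ∈ J := by simp [hJ, hjt]
  have hwpos := wgt_pos A hA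
  have hPe : ∀ j, xstar j ≠ 0 → j ≠ jt → proj A (stdBasis n j) = stdBasis n j :=
    fun j h1 h2 => proj_of_mem A (hJperp j h1 h2)
  have hw1 : ∀ j, xstar j ≠ 0 → j ≠ jt → wgt A j = 1 := by
    intro j h1 h2
    rw [wgt, hPe j h1 h2, stdBasis]
    simp [EuclideanSpace.norm_single]
  set c : ℝ := Real.sign (xstar jt) / wgt A jt with hc
  set a : Fin n → ℝ :=
    fun j => if j = jt then c else Real.sign (xstar j) - c * proj A (stdBasis n jt) j with ha
  set v : Fin n → ℝ :=
    fun i => ∑ j ∈ J, a j * ((wgt A i)⁻¹ * proj A (stdBasis n j) i) with hvdef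
  have hPjt : proj A (stdBasis n jt) jt = wgt A jt ^ 2 := by
    rw [proj_coord, real_inner_self_eq_norm_sq, wgt]
  have hsum : ∀ i : Fin n, v i = c * ((wgt A i)⁻¹ * proj A (stdBasis n jt) i)
      + (if xstar i ≠ 0 ∧ i ≠ jt then a i * (wgt A i)⁻¹ else 0) := by
    intro i
    have h1 : v i = a jt * ((wgt A i)⁻¹ * proj A (stdBasis n jt) i)
        + ∑ j ∈ J.erase jt, a j * ((wgt A i)⁻¹ * proj A (stdBasis n j) i) := by
      rw [hvdef]
      exact (Finset.add_sum_erase J _ hjtJ).symm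
    have h2 : ∀ j ∈ J.erase jt, a j * ((wgt A i)⁻¹ * proj A (stdBasis n j) i)
        = if j = i then a i * (wgt A i)⁻¹ else 0 := by
      intro j hj
      obtain ⟨hjne, hjJ⟩ := Finset.mem_erase.1 hj
      have hxj : xstar j ≠ 0 := (Finset.mem_filter.1 hjJ).2
      rw [hPe j hxj hjne, stdBasis, EuclideanSpace.single_apply]
      by_cases hji : j = i
      · subst hji; simp
      · simp only [if_neg (Ne.symm hji), if_neg hji]; ring
    have hajt : a jt = c := by rw [ha]; simp
    rw [h1, Finset.sum_congr rfl h2,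
      Finset.sum_ite_eq' (J.erase jt) i (fun _ => a i * (wgt A i)⁻¹), hajt]
    congr 1
    by_cases hi : xstar i ≠ 0 ∧ i ≠ jt
    · rw [if_pos hi, if_pos (Finset.mem_erase.2 ⟨hi.2, by simp [hJ, hi.1]⟩)]
    · rw [if_neg hi, if_neg]
      intro hmem
      obtain ⟨h2', h3⟩ := Finset.mem_erase.1 hmem
      exact hi ⟨(Finset.mem_filter.1 h3).2, h2'⟩
  have hv1 : ∀ i, xstar i ≠ 0 → v i = Real.sign (xstar i) := by
    intro i hi
    by_cases hijt : i = jt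
    · subst hijt
      have hw0 : wgt A i ≠ 0 := ne_of_gt (hwpos i)
      rw [hsum i, if_neg (by simp), hPjt, hc, add_zero]
      have hww : (wgt A i)⁻¹ * wgt A i ^ 2 = wgt A i := by
        rw [pow_two, ← mul_assoc, inv_mul_cancel₀ hw0, one_mul]
      rw [hww, div_mul_cancel₀ _ hw0]
    · rw [hsum i, if_pos ⟨hi, hijt⟩, hw1 i hi hijt, ha]
      simp only [if_neg hijt, inv_one, one_mul, mul_one]
      ring
  have hv2 : ∀ i, xstar i = 0 → v i ∈ Set.Ioo (-1 : ℝ) 1 := by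
    intro i hi
    have hijt : i ≠ jt := fun h => hjt (h ▸ hi)
    have hform : v i = c * ((wgt A i)⁻¹ * proj A (stdBasis n jt) i) := by
      rw [hsum i, if_neg (by simp [hi]), add_zero]
    have hp : |proj A (stdBasis n jt) i| < wgt A i * wgt A jt := by
      rw [proj_coord]
      exact strictCS A hA hNP hijt
    have hwi := hwpos i
    have hwj := hwpos jt
    have hs : |Real.sign (xstar jt)| = 1 := by
      rcases Real.sign_apply_eq_of_ne_zero _ hjt with h | h <;> rw [h] <;> norm_num
    have h4 : |v i| < 1 := by
      rw [hform, abs_mul, abs_mul, abs_inv, abs_of_pos hwi, hc, abs_div, hs, abs_of_pos hwj]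
      have heq : 1 / wgt A jt * ((wgt A i)⁻¹ * |proj A (stdBasis n jt) i|)
          = |proj A (stdBasis n jt) i| / (wgt A i * wgt A jt) := by
        field_simp
      rw [heq, div_lt_one (by positivity)]
      exact hp
    rw [Set.mem_Ioo]
    exact abs_lt.1 h4
  have habs1 : ∀ i, |v i| ≤ 1 := by
    intro i
    by_cases hi : xstar i = 0
    · have := hv2 i hi
      rw [Set.mem_Ioo] at this
      exact le_of_lt (abs_lt.2 this)
    · rw [hv1 i hi]
      rcases Real.sign_apply_eq_of_ne_zero _ hi with h | h <;> rw [h] <;> norm_num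
  refine ⟨a, fun i hi => hv1 i hi, fun i hi => hv2 i hi, ?_⟩
  intro α hα hsgn x
  set y := ∑ j ∈ J, (xstar j - α * a j) • stdBasis n j with hy
  have hyc : ∀ i, y i = if xstar i ≠ 0 then xstar i - α * a i else 0 := by
    intro i
    have e1 : y i = ∑ j ∈ J, ((xstar j - α * a j) • stdBasis n j) i := by
      rw [hy, WithLp.ofLp_sum]; exact Finset.sum_apply i J _
    have h2 : ∀ j ∈ J, ((xstar j - α * a j) • stdBasis n j) i
        = if j = i then xstar i - α * a i else 0 := by
      intro j _
      rw [PiLp.smul_apply, stdBasis, EuclideanSpace.single_apply, smul_eq_mul]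
      by_cases hji : j = i
      · subst hji; simp
      · simp [hji, Ne.symm hji]
    rw [e1, Finset.sum_congr rfl h2, Finset.sum_ite_eq' J i (fun _ => xstar i - α * a i)]
    simp only [hJ, Finset.mem_filter, Finset.mem_univ, true_and]
  have hxs : xstar = ∑ j ∈ J, xstar j • stdBasis n j := by
    ext i
    have e1 : (∑ j ∈ J, xstar j • stdBasis n j) i = ∑ j ∈ J, (xstar j • stdBasis n j) i :=
      by rw [WithLp.ofLp_sum]; exact Finset.sum_apply i J _
    have h2 : ∀ j ∈ J, (xstar j • stdBasis n j) i = if j = i then xstar i else 0 := by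
      intro j _
      rw [PiLp.smul_apply, stdBasis, EuclideanSpace.single_apply, smul_eq_mul]
      by_cases hji : j = i
      · subst hji; simp
      · simp [hji, Ne.symm hji]
    rw [e1, Finset.sum_congr rfl h2, Finset.sum_ite_eq' J i (fun _ => xstar i)]
    simp only [hJ, Finset.mem_filter, Finset.mem_univ, true_and]
    by_cases hxi : xstar i = 0 <;> simp [hxi]
  have hPy : proj A y = ∑ j ∈ J, (xstar j - α * a j) • proj A (stdBasis n j) := by
    calc proj A y = projL A y := proj_eq A y
      _ = ∑ j ∈ J, (xstar j - α * a j) • projL A (stdBasis n j) := by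
          rw [hy, map_sum]
          simp only [map_smul]
      _ = ∑ j ∈ J, (xstar j - α * a j) • proj A (stdBasis n j) := by
          simp only [← proj_eq]
  have hPx : proj A xstar = ∑ j ∈ J, xstar j • proj A (stdBasis n j) := by
    have h6 : proj A (∑ j ∈ J, xstar j • stdBasis n j)
        = ∑ j ∈ J, xstar j • proj A (stdBasis n j) := by
      rw [proj_eq, map_sum]
      simp only [map_smul, ← proj_eq]
    rw [← hxs] at h6
    exact h6
  have hg : proj A y - proj A xstar = ∑ j ∈ J, (-(α * a j)) • proj A (stdBasis n j) := by
    rw [hPy, hPx, ← Finset.sum_sub_distrib]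
    refine Finset.sum_congr rfl fun j _ => ?_
    rw [← sub_smul]
    congr 1
    ring
  have hgc : ∀ i, (proj A y - proj A xstar) i = -(α * (wgt A i * v i)) := by
    intro i
    have hwne : wgt A i ≠ 0 := ne_of_gt (hwpos i)
    have e1 : (proj A y - proj A xstar) i
        = ∑ j ∈ J, ((-(α * a j)) • proj A (stdBasis n j)) i := by
      rw [hg, WithLp.ofLp_sum]; exact Finset.sum_apply i J _
    rw [e1, hvdef]
    simp only [PiLp.smul_apply, smul_eq_mul]
    rw [Finset.mul_sum, Finset.mul_sum, ← Finset.sum_neg_distrib]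
    refine Finset.sum_congr rfl fun j _ => ?_
    field_simp
  have key : ∀ i, α * (wgt A i * |y i|) + (proj A y - proj A xstar) i * (y i - x i)
      ≤ α * (wgt A i * |x i|) := by
    intro i
    rw [hgc i]
    have h1 : v i * x i ≤ |x i| := by
      calc v i * x i ≤ |v i * x i| := le_abs_self _
        _ = |v i| * |x i| := abs_mul _ _
        _ ≤ 1 * |x i| := mul_le_mul_of_nonneg_right (habs1 i) (abs_nonneg _)
        _ = |x i| := one_mul _
    have h2 : v i * y i = |y i| := by
      by_cases hi : xstar i = 0
      · rw [hyc i, if_neg (by simpa using hi)]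
        simp
      · have hyi : y i = xstar i - α * a i := by rw [hyc i, if_pos hi]
        rw [hv1 i hi, ← hsgn i hi, hyi, real_sign_mul_self]
    nlinarith [mul_nonneg (mul_nonneg hα.le (hwpos i).le) (sub_nonneg.2 h1), h2,
      mul_nonneg hα.le (hwpos i).le]
  have hsum_le : ∑ i, (α * (wgt A i * |y i|) + (proj A y - proj A xstar) i * (y i - x i))
      ≤ ∑ i, α * (wgt A i * |x i|) := Finset.sum_le_sum fun i _ => key i
  rw [Finset.sum_add_distrib] at hsum_le
  have hwl1y : ∑ i, α * (wgt A i * |y i|) = α * wl1 A y := by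
    rw [wl1, Finset.mul_sum]
  have hwl1x : ∑ i, α * (wgt A i * |x i|) = α * wl1 A x := by
    rw [wl1, Finset.mul_sum]
  have hinner : ∑ i, (proj A y - proj A xstar) i * (y i - x i)
      = ⟪proj A y - proj A xstar, y - x⟫ := by
    rw [PiLp.inner_apply]
    refine Finset.sum_congr rfl fun i _ => ?_
    simp [PiLp.sub_apply]
    ring
  rw [hwl1y, hwl1x, hinner] at hsum_le
  set g := proj A y - proj A xstar with hgdef
  set u := proj A x - proj A xstar with hudef
  have hgfix : proj A g = g := by
    rw [hgdef, proj_eq A (proj A y - proj A xstar), map_sub, ← proj_eq, ← proj_eq,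
      proj_idem, proj_idem]
  have h5 : u - g = proj A (x - y) := by
    rw [hudef, hgdef, proj_eq A (x - y), map_sub, ← proj_eq, ← proj_eq]
    abel
  have hinner2 : ⟪g, x - y⟫ = ⟪g, u - g⟫ := by
    rw [h5, ← proj_inner, hgfix]
  have hexp : ‖u - g‖ ^ 2 = ‖u‖ ^ 2 - 2 * ⟪u, g⟫ + ‖g‖ ^ 2 := norm_sub_sq_real u g
  have hcs : ⟪g, u⟫ ≤ (1 / 2) * ‖u‖ ^ 2 + (1 / 2) * ‖g‖ ^ 2 := by
    have h0 : (0 : ℝ) ≤ ‖u - g‖ ^ 2 := sq_nonneg _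
    have hcomm : ⟪g, u⟫ = ⟪u, g⟫ := real_inner_comm u g
    linarith
  have hxy : ⟪g, y - x⟫ = ‖g‖ ^ 2 - ⟪g, u⟫ := by
    have hneg : ⟪g, y - x⟫ = -⟪g, x - y⟫ := by
      rw [← inner_neg_right]
      congr 1
      abel
    rw [hneg, hinner2, inner_sub_right, real_inner_self_eq_norm_sq]
    ring
  rw [hxy] at hsum_le
  linarith
end

section
/- Assume the non-parallel condition (NP): A e_i ≠ η A e_j for all indices i ≠ j and all η ∈ ℝ. Then for every index j and every nonzero scalar x*_j ∈ ℝ, the vector x* = x*_j e_j is the unique minimizer of the weighted ℓ1 norm ‖W x‖₁ = Σ_{i=1}^n w_i |x_i| over all x ∈ ℝⁿ satisfying A x = A (x*_j e_j). -/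
open scoped RealInnerProductSpace Classical

section Aux

variable {m n : ℕ} (A : EuclideanSpace ℝ (Fin n) →ₗ[ℝ] EuclideanSpace ℝ (Fin m))

lemma proj_eq_zero_iff (v : EuclideanSpace ℝ (Fin n)) : proj A v = 0 ↔ A v = 0 := by
  rw [proj, show ((Submodule.orthogonalProjection (LinearMap.ker A)ᗮ v : EuclideanSpace ℝ (Fin n)) = 0
      ↔ Submodule.orthogonalProjection (LinearMap.ker A)ᗮ v = 0) from Submodule.coe_eq_zero,
    Submodule.orthogonalProjectionOnto_eq_zero_iff, Submodule.orthogonal_orthogonal, LinearMap.mem_ker]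

lemma proj_smul (c : ℝ) (x : EuclideanSpace ℝ (Fin n)) : proj A (c • x) = c • proj A x := by
  simp [proj]

lemma proj_sub (x y : EuclideanSpace ℝ (Fin n)) : proj A (x - y) = proj A x - proj A y := by
  simp [proj]

lemma sum_stdBasis (x : EuclideanSpace ℝ (Fin n)) : ∑ i, x i • stdBasis n i = x := by
  simpa [stdBasis, EuclideanSpace.basisFun_apply, EuclideanSpace.basisFun_repr] using
    (EuclideanSpace.basisFun (Fin n) ℝ).sum_repr x

lemma proj_eq_sum (x : EuclideanSpace ℝ (Fin n)) :
    proj A x = ∑ i, x i • proj A (stdBasis n i) := by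
  conv_lhs => rw [← sum_stdBasis x]
  simp [proj]

lemma wl1_smul_single (j : Fin n) (xj : ℝ) : wl1 A (xj • stdBasis n j) = wgt A j * |xj| := by
  unfold wl1
  rw [Finset.sum_eq_single j]
  · simp [stdBasis, EuclideanSpace.single_apply]
  · intro i _ hij; simp [stdBasis, EuclideanSpace.single_apply, hij]
  · simp

lemma norm_proj_le (x : EuclideanSpace ℝ (Fin n)) : ‖proj A x‖ ≤ wl1 A x := by
  rw [proj_eq_sum]
  refine le_trans (norm_sum_le _ _) (le_of_eq ?_)
  simp [wl1, wgt, norm_smul, mul_comm]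

lemma not_proj_parallel
    (hNP : ∀ i j : Fin n, i ≠ j → ∀ η : ℝ, A (stdBasis n i) ≠ η • A (stdBasis n j))
    (i k : Fin n) (hik : i ≠ k) (c : ℝ) :
    proj A (stdBasis n i) ≠ c • proj A (stdBasis n k) := by
  intro h
  refine hNP i k hik c ?_
  have h0 : proj A (stdBasis n i - c • stdBasis n k) = 0 := by
    rw [proj_sub, proj_smul, h, sub_self]
  have h1 := (proj_eq_zero_iff A _).mp h0
  rw [map_sub, map_smul, sub_eq_zero] at h1
  exact h1

end Aux

theorem stmt13 {m n : ℕ}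
    (A : EuclideanSpace ℝ (Fin n) →ₗ[ℝ] EuclideanSpace ℝ (Fin m))
    (hA : ∀ i, stdBasis n i ∉ LinearMap.ker A)
    (hNP : ∀ i j : Fin n, i ≠ j → ∀ η : ℝ, A (stdBasis n i) ≠ η • A (stdBasis n j))
 :
    ∀ (j : Fin n) (xj : ℝ), xj ≠ 0 →
      (∀ x : EuclideanSpace ℝ (Fin n), A x = A (xj • stdBasis n j) →
        wl1 A (xj • stdBasis n j) ≤ wl1 A x) ∧
      ∀ y : EuclideanSpace ℝ (Fin n), A y = A (xj • stdBasis n j) →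
        (∀ x : EuclideanSpace ℝ (Fin n), A x = A (xj • stdBasis n j) → wl1 A y ≤ wl1 A x) →
        y = xj • stdBasis n j := by
  intro j xj hxj
  have hPe : ∀ i, proj A (stdBasis n i) ≠ 0 := fun i h =>
    hA i (LinearMap.mem_ker.mpr ((proj_eq_zero_iff A _).mp h))
  have hfeas : ∀ x : EuclideanSpace ℝ (Fin n), A x = A (xj • stdBasis n j) →
      proj A x = proj A (xj • stdBasis n j) := by
    intro x hx
    have h0 : proj A (x - xj • stdBasis n j) = 0 :=
      (proj_eq_zero_iff A _).mpr (by rw [map_sub, hx, sub_self])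
    rw [proj_sub, sub_eq_zero] at h0; exact h0
  have hstar : ‖proj A (xj • stdBasis n j)‖ = wl1 A (xj • stdBasis n j) := by
    rw [proj_smul, norm_smul, wl1_smul_single, wgt, Real.norm_eq_abs, mul_comm]
  constructor
  · intro x hx
    calc wl1 A (xj • stdBasis n j) = ‖proj A x‖ := by rw [← hstar, hfeas x hx]
    _ ≤ wl1 A x := norm_proj_le A x
  · intro y hy hmin
    set v : Fin n → EuclideanSpace ℝ (Fin n) := fun i => y i • proj A (stdBasis n i) with hv
    have hPy : proj A y = proj A (xj • stdBasis n j) := hfeas y hy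
    have hle : wl1 A y ≤ wl1 A (xj • stdBasis n j) := hmin _ rfl
    have heq : wl1 A y = ‖proj A y‖ := by
      refine le_antisymm ?_ (norm_proj_le A y)
      rw [hPy, hstar]; exact hle
    have hsum_eq : ∑ i, ‖v i‖ = ‖∑ i, v i‖ := by
      have h1 : ∑ i, ‖v i‖ = wl1 A y := by
        simp [hv, wl1, wgt, norm_smul, mul_comm]
      have h2 : (∑ i, v i) = proj A y := (proj_eq_sum A y).symm
      rw [h1, h2, ← heq]
    have hpair : ∀ i k : Fin n, i ≠ k → y i ≠ 0 → y k ≠ 0 → False := by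
      intro i k hik hyi hyk
      have hmem_k : k ∈ Finset.univ.erase i :=
        Finset.mem_erase.mpr ⟨hik.symm, Finset.mem_univ k⟩
      have e1 : ∑ l, v l = (v i + v k) + ∑ l ∈ (Finset.univ.erase i).erase k, v l := by
        rw [add_assoc, Finset.add_sum_erase _ _ hmem_k, Finset.add_sum_erase _ _ (Finset.mem_univ i)]
      have e2 : ∑ l, ‖v l‖ = (‖v i‖ + ‖v k‖) + ∑ l ∈ (Finset.univ.erase i).erase k, ‖v l‖ := by
        rw [add_assoc, Finset.add_sum_erase _ (fun l => ‖v l‖) hmem_k,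
          Finset.add_sum_erase _ (fun l => ‖v l‖) (Finset.mem_univ i)]
      have hub : ‖∑ l, v l‖ ≤ ‖v i + v k‖ + ∑ l ∈ (Finset.univ.erase i).erase k, ‖v l‖ := by
        rw [e1]
        calc ‖(v i + v k) + ∑ l ∈ (Finset.univ.erase i).erase k, v l‖
            ≤ ‖v i + v k‖ + ‖∑ l ∈ (Finset.univ.erase i).erase k, v l‖ := norm_add_le _ _
        _ ≤ ‖v i + v k‖ + ∑ l ∈ (Finset.univ.erase i).erase k, ‖v l‖ :=
            add_le_add_right (norm_sum_le _ _) _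
      have hvik : ‖v i + v k‖ = ‖v i‖ + ‖v k‖ := by
        refine le_antisymm (norm_add_le _ _) ?_
        have := hsum_eq ▸ hub
        rw [e2] at this
        linarith
      have hsr : SameRay ℝ (v i) (v k) := sameRay_iff_norm_add.mpr hvik
      have hvi0 : v i ≠ 0 := smul_ne_zero hyi (hPe i)
      have hvk0 : v k ≠ 0 := smul_ne_zero hyk (hPe k)
      obtain ⟨r, hr, hreq⟩ := hsr.exists_pos_left hvi0 hvk0
      have h1 : (r * y i) • proj A (stdBasis n i) = y k • proj A (stdBasis n k) := by
        rw [← smul_smul]; exact hreq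
      have hne : r * y i ≠ 0 := mul_ne_zero hr.ne' hyi
      have h2 : proj A (stdBasis n i) = ((r * y i)⁻¹ * y k) • proj A (stdBasis n k) := by
        rw [← smul_smul, ← h1, smul_smul, inv_mul_cancel₀ hne, one_smul]
      exact not_proj_parallel A hNP i k hik _ h2
    by_cases hz : ∀ i, y i = 0
    · exfalso
      have hy0 : y = 0 := by ext i; exact hz i
      rw [hy0] at hPy
      have h0 : proj A (xj • stdBasis n j) = 0 := by
        rw [← hPy]; simp [proj]
      rw [proj_smul] at h0
      rcases smul_eq_zero.mp h0 with h | h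
      · exact hxj h
      · exact hPe j h
    · push_neg at hz
      obtain ⟨i, hyi⟩ := hz
      have hzero : ∀ k, k ≠ i → y k = 0 := by
        intro k hk
        by_contra hyk
        exact hpair i k (fun h => hk h.symm) hyi hyk
      have hyrepr : y = y i • stdBasis n i := by
        ext k
        by_cases hk : k = i
        · subst hk; simp [stdBasis, EuclideanSpace.single_apply]
        · simp [stdBasis, EuclideanSpace.single_apply, hk, hzero k hk]
      have hPy2 : y i • proj A (stdBasis n i) = xj • proj A (stdBasis n j) := by
        rw [← proj_smul, ← hyrepr, hPy, proj_smul]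
      have hij : i = j := by
        by_contra hij
        have h2 : proj A (stdBasis n i) = ((y i)⁻¹ * xj) • proj A (stdBasis n j) := by
          rw [← smul_smul, ← hPy2, smul_smul, inv_mul_cancel₀ hyi, one_smul]
        exact not_proj_parallel A hNP i j hij _ h2
      subst hij
      have h0 : (y i - xj) • proj A (stdBasis n i) = 0 := by
        rw [sub_smul, hPy2, sub_self]
      have hyx : y i = xj := by
        rcases smul_eq_zero.mp h0 with h | h
        · exact sub_eq_zero.mp h
        · exact absurd h (hPe i)
      rw [hyrepr, hyx]
end
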